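/- Let X and Y be objects of C and let f₁, f₂, …, f_n ∈ Hom_C(X,Y) be nonzero morphisms. If the linear maps F(f₁), …, F(f_n) are linearly dependent over K in Hom_K(F(X),F(Y)), then f₁, …, f_n are linearly dependent over K₀ in Hom_C(X,Y). -/

import Mathlib

open CategoryTheory MonoidalCategory Limits

set_option linter.unusedSectionVars false
attribute [local instance] CategoryTheory.Abelian.hasFiniteBiproducts

section Surj

variable {K : Type} [Field K]

/-- a nonzero map into a 1-dimensional module is surjective -/
lemma aux_surj {M N : FGModuleCat K} (q : M ⟶ N)
    (hN : Module.finrank K N = 1) (hq : q ≠ 0) : Function.Surjective q := by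
  have : ∃ x : M, q x ≠ 0 := by
    by_contra h
    push_neg at h
    exact hq (by ext x; exact h x)
  obtain ⟨x, hx⟩ := this
  have hspan : Submodule.span K {q x} = ⊤ := by
    apply Submodule.eq_top_of_finrank_eq
    rw [finrank_span_singleton hx, hN]
  intro z
  have hz : z ∈ Submodule.span K ({q x} : Set N) := hspan ▸ Submodule.mem_top
  obtain ⟨c, hc⟩ := Submodule.mem_span_singleton.mp hz
  exact ⟨c • x, by rw [map_smul, hc]⟩


end Surj


section Phi

variable {C : Type*} [Category C] [Abelian C]
    [MonoidalCategory C] [SymmetricCategory C] [RigidCategory C]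

/-- auxiliary constant used in the hom-adjunction `(X ⟶ Y) ≃ (𝟙 ⟶ Y ⊗ Xᘁ)` -/
noncomputable def auxConst (X : C) : 𝟙_ C ⟶ X ⊗ Xᘁ :=
  (ρ_ (𝟙_ C)).inv ≫ (𝟙_ C ◁ η_ X Xᘁ) ≫ (α_ _ _ _).inv ≫ ((λ_ X).hom ▷ Xᘁ)

/-- the adjunction map `(X ⟶ Y) → (𝟙 ⟶ Y ⊗ Xᘁ)` -/
noncomputable def auxPhi {X Y : C} (f : X ⟶ Y) : 𝟙_ C ⟶ Y ⊗ Xᘁ :=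
  auxConst X ≫ (f ▷ Xᘁ)

lemma auxPhi_eq {X Y : C} (f : X ⟶ Y) :
    auxPhi f = (tensorRightHomEquiv (𝟙_ C) X Xᘁ Y) ((λ_ X).hom ≫ f) := by
  simp [auxPhi, auxConst, tensorRightHomEquiv, comp_whiskerRight, Category.assoc]

lemma auxPhi_injective {X Y : C} : Function.Injective (auxPhi (X := X) (Y := Y)) := by
  intro a b h
  rw [auxPhi_eq, auxPhi_eq] at h
  have h2 := (tensorRightHomEquiv (𝟙_ C) X Xᘁ Y).injective h
  exact (cancel_epi ((λ_ X).hom)).mp h2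

end Phi

section Aux

open Functor.LaxMonoidal Functor.OplaxMonoidal Functor.Monoidal

variable {K₀ K : Type} [Field K₀] [Field K] [Algebra K₀ K]
    {C : Type*} [Category C] [Abelian C] [Linear K₀ C]
    [MonoidalCategory C] [SymmetricCategory C] [RigidCategory C]
    (F : C ⥤ FGModuleCat K) [F.Braided] [F.Additive] [F.Faithful]
    [Limits.PreservesFiniteLimits F] [Limits.PreservesFiniteColimits F]

include F

/-- `F` reflects zero objects. -/
lemma aux_reflect_isZero {Z : C} (h : IsZero (F.obj Z)) : IsZero Z := by
  rw [IsZero.iff_id_eq_zero]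
  apply F.map_injective
  rw [F.map_id, F.map_zero]
  exact h.eq_of_src _ _

lemma aux_finrank_unit : Module.finrank K (F.obj (𝟙_ C)) = 1 := by
  have e := (FGModuleCat.isoToLinearEquiv (εIso F)).symm
  rw [LinearEquiv.finrank_eq e]
  exact Module.finrank_self K

/-- the unit is simple: any nonzero map to it is epi -/
lemma aux_epi_to_unit {W : C} (p : W ⟶ 𝟙_ C) (hp : p ≠ 0) : Epi p := by
  apply CategoryTheory.Abelian.epi_of_cokernel_π_eq_zero
  have hFp : F.map p ≠ 0 := fun h => hp (F.map_injective (by rw [h, F.map_zero]))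
  have hsurj : Function.Surjective (F.map p) := aux_surj _ (aux_finrank_unit F) hFp
  have h0 : F.map p ≫ F.map (cokernel.π p) = 0 := by
    rw [← F.map_comp, cokernel.condition, F.map_zero]
  have hmapq : F.map (cokernel.π p) = 0 := by
    ext y
    obtain ⟨x, rfl⟩ := hsurj y
    have h1 := ConcreteCategory.congr_hom h0 x
    exact h1
  have hzF : IsZero (F.obj (cokernel p)) := by
    rw [IsZero.iff_id_eq_zero]
    haveI : Epi (F.map (cokernel.π p)) := F.map_epi _
    rw [← cancel_epi (F.map (cokernel.π p)), hmapq, zero_comp, comp_zero]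
  exact (aux_reflect_isZero F hzF).eq_of_tgt _ _

/-- whiskering on the right is additive (derived via the fiber functor) -/
lemma aux_whisker_add {A B : C} (g g' : A ⟶ B) (W : C) :
    (g + g') ▷ W = g ▷ W + g' ▷ W := by
  apply F.map_injective
  rw [F.map_add, Functor.Monoidal.map_whiskerRight, Functor.Monoidal.map_whiskerRight,
    Functor.Monoidal.map_whiskerRight, F.map_add, MonoidalPreadditive.add_whiskerRight,
    Preadditive.add_comp, Preadditive.comp_add]

lemma aux_whisker_zero {A B : C} (W : C) : (0 : A ⟶ B) ▷ W = 0 := by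
  have := aux_whisker_add F (0 : A ⟶ B) 0 W
  rw [add_zero] at this
  exact left_eq_add.mp this

lemma aux_whisker_smul
    (hFlin : ∀ (a : K₀) ⦃X Y : C⦄ (f : X ⟶ Y),
      F.map (a • f) = (algebraMap K₀ K a) • F.map f)
    (a : K₀) {A B : C} (g : A ⟶ B) (W : C) :
    (a • g) ▷ W = a • (g ▷ W) := by
  apply F.map_injective
  rw [Functor.Monoidal.map_whiskerRight, hFlin, hFlin, Functor.Monoidal.map_whiskerRight,
    MonoidalLinear.smul_whiskerRight, Linear.smul_comp, Linear.comp_smul]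

/-- whiskering a finite sum -/
lemma aux_whisker_sum {A B : C} {J : Type*} (s : Finset J) (g : J → (A ⟶ B)) (W : C) :
    (∑ i ∈ s, g i) ▷ W = ∑ i ∈ s, (g i) ▷ W := by
  classical
  induction s using Finset.induction with
  | empty => simp [aux_whisker_zero F]
  | insert _ _ h ih =>
      rw [Finset.sum_insert h, Finset.sum_insert h, aux_whisker_add F, ih]

/-- the unit object is nonzero provided some hom is nonzero -/
lemma aux_unit_ne_zero {X Y : C} (f : X ⟶ Y) (hf : f ≠ 0) : 𝟙 (𝟙_ C) ≠ 0 := by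
  intro h
  apply hf
  have h1 : 𝟙 (𝟙_ C ⊗ X) = 0 := by
    rw [← MonoidalCategory.id_whiskerRight, h, aux_whisker_zero F]
  calc f = (λ_ X).inv ≫ 𝟙 (𝟙_ C ⊗ X) ≫ (λ_ X).hom ≫ f := by simp
    _ = 0 := by rw [h1, zero_comp, comp_zero]

/-- every nonzero subobject of `𝟙^m` receives a nonzero map from `𝟙` -/
lemma aux_sub (hne : 𝟙 (𝟙_ C) ≠ 0) (m : ℕ) :
    ∀ (W : C) (k : W ⟶ ⨁ (fun _ : Fin m => 𝟙_ C)), Mono k → k ≠ 0 →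
      ∃ s : 𝟙_ C ⟶ W, s ≠ 0 := by
  induction m with
  | zero =>
      intro W k hk hk0
      exact absurd (biproduct.hom_ext _ _ (fun j => Fin.elim0 j)) hk0
  | succ m ih =>
      -- helper: drop the last coordinate when it vanishes
      have drop : ∀ (W : C) (k : W ⟶ ⨁ (fun _ : Fin (m+1) => 𝟙_ C)), Mono k → k ≠ 0 →
          k ≫ biproduct.π _ (Fin.last m) = 0 →
          ∃ k' : W ⟶ ⨁ (fun _ : Fin m => 𝟙_ C), Mono k' ∧ k' ≠ 0 := by
        intro W k hk hk0 hlast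
        refine ⟨biproduct.lift (fun i : Fin m => k ≫ biproduct.π _ i.castSucc), ?_, ?_⟩
        · apply Preadditive.mono_of_cancel_zero
          intro P x hx
          haveI := hk
          apply zero_of_comp_mono k
          apply biproduct.hom_ext
          intro j
          induction j using Fin.lastCases with
          | last => rw [Category.assoc, hlast, comp_zero, zero_comp]
          | cast i =>
              have := congrArg (fun h => h ≫ biproduct.π (fun _ : Fin m => 𝟙_ C) i) hx
              simpa using this
        · intro h0
          apply hk0
          apply biproduct.hom_ext
          intro j
          induction j using Fin.lastCases with
          | last => rw [hlast, zero_comp]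
          | cast i =>
              have := congrArg (fun h => h ≫ biproduct.π (fun _ : Fin m => 𝟙_ C) i) h0
              simpa using this
      intro W k hk hk0
      haveI := hk
      by_cases hp : k ≫ biproduct.π _ (Fin.last m) = 0
      · obtain ⟨k', hk', hk'0⟩ := drop W k hk hk0 hp
        exact ih W k' hk' hk'0
      · set p := k ≫ biproduct.π _ (Fin.last m) with hpdef
        haveI hepi : Epi p := aux_epi_to_unit F p hp
        by_cases hk₀ : kernel.ι p = 0
        · haveI : Mono p := CategoryTheory.Abelian.mono_of_kernel_ι_eq_zero p hk₀
          haveI : IsIso p := isIso_of_mono_of_epi p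
          refine ⟨inv p, ?_⟩
          intro h
          have := IsIso.inv_hom_id p
          rw [h, zero_comp] at this
          exact hne this.symm
        · have hj0 : kernel.ι p ≫ k ≠ 0 := by
            intro h
            exact hk₀ (zero_of_comp_mono k h)
          have hjlast : (kernel.ι p ≫ k) ≫ biproduct.π _ (Fin.last m) = 0 := by
            rw [Category.assoc, ← hpdef, kernel.condition]
          haveI : Mono (kernel.ι p ≫ k) := mono_comp _ _
          obtain ⟨j', hj', hj'0⟩ := drop (kernel p) (kernel.ι p ≫ k) inferInstance hj0 hjlast
          obtain ⟨s', hs'⟩ := ih (kernel p) j' hj' hj'0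
          refine ⟨s' ≫ kernel.ι p, ?_⟩
          intro h
          exact hs' (zero_of_comp_mono _ h)


lemma aux_phi_zero {X Y : C} : auxPhi (0 : X ⟶ Y) = 0 := by
  rw [auxPhi, aux_whisker_zero F, comp_zero]

lemma aux_phi_sum_smul
    (hFlin : ∀ (a : K₀) ⦃X Y : C⦄ (f : X ⟶ Y),
      F.map (a • f) = (algebraMap K₀ K a) • F.map f)
    {X Y : C} {n : ℕ} (a : Fin n → K₀) (f : Fin n → (X ⟶ Y)) :
    auxPhi (∑ i, a i • f i) = ∑ i, a i • auxPhi (f i) := by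
  simp only [auxPhi, aux_whisker_sum F, aux_whisker_smul F hFlin,
    Preadditive.comp_sum, Linear.comp_smul]

lemma aux_F_phi {X Y : C} (f : X ⟶ Y) :
    F.map (auxPhi f) = F.map (auxConst X) ≫ Functor.OplaxMonoidal.δ F X Xᘁ ≫
      (F.map f ▷ F.obj Xᘁ) ≫ Functor.LaxMonoidal.μ F Y Xᘁ := by
  rw [auxPhi, F.map_comp, Functor.Monoidal.map_whiskerRight]

lemma aux_F_rel {X Y : C} {n : ℕ} (c : Fin n → K) (f : Fin n → (X ⟶ Y))
    (hc : ∑ i, c i • F.map (f i) = 0) :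
    ∑ i, c i • F.map (auxPhi (f i)) = 0 := by
  have : ∑ i, c i • F.map (auxPhi (f i)) =
      F.map (auxConst X) ≫ Functor.OplaxMonoidal.δ F X Xᘁ ≫
        ((∑ i, c i • F.map (f i)) ▷ F.obj Xᘁ) ≫ Functor.LaxMonoidal.μ F Y Xᘁ := by
    simp only [aux_F_phi F, sum_whiskerRight, MonoidalLinear.smul_whiskerRight,
      Preadditive.sum_comp, Preadditive.comp_sum, Linear.smul_comp, Linear.comp_smul]
  rw [this, hc]
  simp

end Aux

/-- Let `K₀ ⊆ K` be fields of characteristic zero, `C` a `K₀`-linear abelian symmetric monoidal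
rigid category with `End(𝟙) = K₀`, and `F : C ⥤ Vec_K` an exact faithful additive `K₀`-linear
symmetric monoidal (fiber) functor.  If `f₁, …, f_n : X ⟶ Y` are nonzero morphisms of `C` such
that `F(f₁), …, F(f_n)` are linearly dependent over `K`, then `f₁, …, f_n` are linearly
dependent over `K₀`. -/
theorem linearDependent_over_K₀_of_linearDependent_over_K
    {K₀ K : Type} [Field K₀] [Field K] [Algebra K₀ K] [CharZero K₀] [CharZero K]
    {C : Type*} [Category C] [Abelian C] [Linear K₀ C]
    [MonoidalCategory C] [SymmetricCategory C] [RigidCategory C]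
    (hEnd : Function.Bijective (fun a : K₀ => a • (𝟙 (𝟙_ C))))
    (F : C ⥤ FGModuleCat K) [F.Braided] [F.Additive] [F.Faithful]
    [Limits.PreservesFiniteLimits F] [Limits.PreservesFiniteColimits F]
    (hFlin : ∀ (a : K₀) ⦃X Y : C⦄ (f : X ⟶ Y),
      F.map (a • f) = (algebraMap K₀ K a) • F.map f)
    {X Y : C} {n : ℕ} (f : Fin n → (X ⟶ Y)) (hf : ∀ i, f i ≠ 0)
    (hdep : ¬ LinearIndependent K (fun i : Fin n => F.map (f i))) :
    ¬ LinearIndependent K₀ f := by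
  classical
  rw [Fintype.not_linearIndependent_iff]
  obtain ⟨c, hc, i₀, hc₀⟩ := Fintype.not_linearIndependent_iff.mp hdep
  have hne : 𝟙 (𝟙_ C) ≠ 0 := aux_unit_ne_zero F (f i₀) (hf i₀)
  set g : Fin n → (𝟙_ C ⟶ Y ⊗ Xᘁ) := fun i => auxPhi (f i) with hg
  have hFrel : ∑ i, c i • F.map (g i) = 0 := aux_F_rel F c f hc
  let u : (⨁ fun _ : Fin n => 𝟙_ C) ⟶ Y ⊗ Xᘁ := biproduct.desc g
  have hιu : ∀ i, biproduct.ι (fun _ : Fin n => 𝟙_ C) i ≫ u = g i :=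
    fun i => biproduct.ι_desc _ _
  have hu : ¬ Mono u := by
    intro hMono
    haveI := hMono
    haveI : Mono (F.map u) := F.map_mono u
    have hv : (∑ i, c i • F.map (biproduct.ι (fun _ : Fin n => 𝟙_ C) i)) ≫ F.map u = 0 := by
      rw [Preadditive.sum_comp]
      simp only [Linear.smul_comp, ← F.map_comp, hιu]
      exact hFrel
    have hv0 := zero_of_comp_mono (F.map u) hv
    have h2 := congrArg (fun h => h ≫ F.map (biproduct.π (fun _ : Fin n => 𝟙_ C) i₀)) hv0
    simp only [Preadditive.sum_comp, Category.assoc, Linear.smul_comp, ← F.map_comp,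
      zero_comp] at h2
    rw [Finset.sum_eq_single i₀] at h2
    · rw [biproduct.ι_π_self, F.map_id] at h2
      have hid : (𝟙 (F.obj (𝟙_ C)) : F.obj (𝟙_ C) ⟶ F.obj (𝟙_ C)) = 0 :=
        (smul_eq_zero.mp h2).resolve_left hc₀
      exact hne (F.map_injective (by rw [F.map_id, hid, F.map_zero]))
    · intro b _ hb
      rw [biproduct.ι_π_ne _ hb, F.map_zero, smul_zero]
    · intro h
      exact absurd (Finset.mem_univ i₀) h
  have hk : kernel.ι u ≠ 0 := fun h => hu (CategoryTheory.Abelian.mono_of_kernel_ι_eq_zero u h)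
  obtain ⟨s, hs⟩ := aux_sub F hne n (kernel u) (kernel.ι u) inferInstance hk
  set t : 𝟙_ C ⟶ (⨁ fun _ : Fin n => 𝟙_ C) := s ≫ kernel.ι u with ht
  have ht0 : t ≠ 0 := fun h => hs (zero_of_comp_mono _ h)
  have htu : t ≫ u = 0 := by rw [ht, Category.assoc, kernel.condition, comp_zero]
  choose a ha using fun i => hEnd.surjective (t ≫ biproduct.π (fun _ : Fin n => 𝟙_ C) i)
  have hrel : ∑ i, a i • g i = 0 := by
    have hcalc : t ≫ u = ∑ j, a j • g j := by
      conv_lhs => rw [← Category.id_comp u, ← biproduct.total]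
      rw [Preadditive.sum_comp, Preadditive.comp_sum]
      refine Finset.sum_congr rfl fun j _ => ?_
      simp only [Category.assoc]
      rw [← Category.assoc, ← ha j]
      simp only [hιu]
      simp [Linear.smul_comp]
    rw [← hcalc, htu]
  have hex : ∃ j, a j ≠ 0 := by
    by_contra h
    push_neg at h
    apply ht0
    apply biproduct.hom_ext
    intro j
    rw [zero_comp, ← ha j, h j]
    simp
  obtain ⟨j, hj⟩ := hex
  refine ⟨a, ?_, j, hj⟩
  apply auxPhi_injective
  rw [aux_phi_sum_smul F hFlin a f]
  rw [aux_phi_zero F]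
  exact hrel
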